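/- Let p be an odd prime, n a positive integer, r an integer, and define S_1(n,r) = p^{−⌊(n−1)/(p−1)⌋} · Σ_{k ≡ r (mod p), 0≤k≤n} (−1)^k C(n,k). If n = (p−1)s for a positive integer s, then S_1(n,r) is an integer and S_1(n,r) ≡ (−1)^{s−1} (mod p) for every r. -/

import Mathlib

/-- `∑_{k ≡ r (mod p), 0 ≤ k ≤ n} (-1)^k C(n,k)`. -/
def S1sum (p n : ℕ) (r : ℤ) : ℤ :=
  ∑ k ∈ Finset.range (n + 1), if (k : ℤ) ≡ r [ZMOD p] then (-1) ^ k * (n.choose k : ℤ) else 0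

/-- `S_1(n,r) = p^{-⌊(n-1)/(p-1)⌋} ∑_{k ≡ r (p)} (-1)^k C(n,k)`. -/
def S1 (p n : ℕ) (r : ℤ) : ℤ := S1sum p n r / (p : ℤ) ^ ((n - 1) / (p - 1))

open Finset AddMonoidAlgebra

namespace S1Aux

variable (p : ℕ)

noncomputable def tt : AddMonoidAlgebra ℤ (ZMod p) := AddMonoidAlgebra.single 1 1
noncomputable def yy : AddMonoidAlgebra ℤ (ZMod p) := 1 - tt p
noncomputable def uu : AddMonoidAlgebra ℤ (ZMod p) :=
  ∑ k ∈ Finset.range p, AddMonoidAlgebra.single (k : ZMod p) 1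
noncomputable def vv : AddMonoidAlgebra ℤ (ZMod p) :=
  ∑ k ∈ Finset.range p,
    AddMonoidAlgebra.single (k : ZMod p) (((-1) ^ k * (((p - 1).choose k : ℕ) : ℤ) - 1) / p)

noncomputable def eps : AddMonoidAlgebra ℤ (ZMod p) →+* ℤ :=
  AddMonoidAlgebra.liftNCRingHom (RingHom.id ℤ) 1 (fun _ _ => Commute.all _ _)

@[simp] lemma eps_single (a : ZMod p) (b : ℤ) : eps p (AddMonoidAlgebra.single a b) = b := by
  simp [eps, liftNCRingHom]

lemma tt_pow (k : ℕ) : tt p ^ k = AddMonoidAlgebra.single (k : ZMod p) 1 := by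
  rw [tt, AddMonoidAlgebra.single_pow]
  simp [nsmul_eq_mul]

lemma intCast_mul_single (c : ℤ) (a : ZMod p) (b : ℤ) :
    (c : AddMonoidAlgebra ℤ (ZMod p)) * AddMonoidAlgebra.single a b
      = AddMonoidAlgebra.single a (c * b) := by
  rw [AddMonoidAlgebra.intCast_def, AddMonoidAlgebra.single_mul_single, zero_add]
  simp

lemma single_mul_intCast (c : ℤ) (a : ZMod p) (b : ℤ) :
    AddMonoidAlgebra.single a b * (c : AddMonoidAlgebra ℤ (ZMod p))
      = AddMonoidAlgebra.single a (b * c) := by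
  rw [AddMonoidAlgebra.intCast_def, AddMonoidAlgebra.single_mul_single, add_zero]
  simp

lemma yy_pow (n : ℕ) :
    yy p ^ n = ∑ k ∈ Finset.range (n + 1),
      AddMonoidAlgebra.single (k : ZMod p) ((-1) ^ k * (n.choose k : ℤ)) := by
  have h : yy p = -tt p + 1 := by rw [yy]; ring
  rw [h, add_pow]
  refine Finset.sum_congr rfl fun k hk => ?_
  rw [neg_pow, tt_pow, one_pow, mul_one]
  have h1 : ((-1 : AddMonoidAlgebra ℤ (ZMod p)) ^ k)
      = (((-1 : ℤ) ^ k : ℤ) : AddMonoidAlgebra ℤ (ZMod p)) := by push_cast; ring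
  have h2 : ((n.choose k : ℕ) : AddMonoidAlgebra ℤ (ZMod p))
      = (((n.choose k : ℤ)) : AddMonoidAlgebra ℤ (ZMod p)) := by push_cast; ring
  rw [h1, h2, mul_assoc, single_mul_intCast, intCast_mul_single]
  simp

lemma eps_yy : eps p (yy p) = 0 := by
  have : eps p (tt p) = 1 := by rw [tt]; simp
  rw [yy, map_sub, map_one, this, sub_self]

lemma eps_uu : eps p (uu p) = p := by
  rw [uu, map_sum]
  simp

lemma uu_eq [NeZero p] : uu p = ∑ g : ZMod p, AddMonoidAlgebra.single g 1 := by
  rw [uu]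
  refine Finset.sum_nbij' (fun k => (k : ZMod p)) (fun g => g.val) ?_ ?_ ?_ ?_ ?_
  · intro a ha; exact Finset.mem_univ _
  · intro g hg; exact Finset.mem_range.2 (ZMod.val_lt g)
  · intro a ha; exact ZMod.val_natCast_of_lt (Finset.mem_range.1 ha)
  · intro g hg; exact ZMod.natCast_rightInverse g
  · intro a ha; rfl

lemma uu_apply [NeZero p] (x : ZMod p) : (uu p).coeff x = 1 := by
  classical
  rw [uu_eq]
  rw [AddMonoidAlgebra.coeff_sum, Finset.sum_apply']
  rw [Finset.sum_eq_single x]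
  · simp [AddMonoidAlgebra.coeff_single, Finsupp.single_apply]
  · intro g _ hg; simp [AddMonoidAlgebra.coeff_single, Finsupp.single_apply, hg]
  · intro h; exact absurd (Finset.mem_univ x) h

lemma uu_mul_single [NeZero p] (a : ZMod p) (b : ℤ) :
    uu p * AddMonoidAlgebra.single a b = (b : AddMonoidAlgebra ℤ (ZMod p)) * uu p := by
  classical
  rw [uu_eq, Finset.sum_mul, Finset.mul_sum]
  rw [← Equiv.sum_comp (Equiv.addRight a)
    (fun g => (b : AddMonoidAlgebra ℤ (ZMod p)) * AddMonoidAlgebra.single g 1)]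
  refine Finset.sum_congr rfl fun g _ => ?_
  rw [AddMonoidAlgebra.single_mul_single, intCast_mul_single]
  simp [Equiv.addRight]

lemma uu_mul [NeZero p] (f : AddMonoidAlgebra ℤ (ZMod p)) :
    uu p * f = ((eps p f : ℤ) : AddMonoidAlgebra ℤ (ZMod p)) * uu p := by
  classical
  induction f using AddMonoidAlgebra.induction with
  | zero => simp
  | single_add a b f _ _ ih =>
      rw [mul_add, ih, uu_mul_single, map_add, eps_single]
      push_cast
      ring

lemma choose_pred_dvd (hp : p.Prime) :
    ∀ k, k < p → (p : ℤ) ∣ (-1) ^ k * ((p - 1).choose k : ℤ) - 1 := by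
  intro k
  induction k with
  | zero => intro _; simp
  | succ k ih =>
      intro hk
      have hk' : k < p := Nat.lt_of_succ_lt hk
      obtain ⟨c, hc⟩ := ih hk'
      have h1 : p - 1 + 1 = p := Nat.succ_pred_eq_of_pos hp.pos
      have hid := Nat.choose_succ_succ (p - 1) k
      rw [Nat.succ_eq_add_one, Nat.succ_eq_add_one, h1] at hid
      obtain ⟨d, hd⟩ := hp.dvd_choose_self (Nat.succ_ne_zero k) hk
      have hd' : ((p - 1).choose k : ℤ) + ((p - 1).choose (k + 1) : ℤ) = (p : ℤ) * d := by
        exact_mod_cast congrArg (Nat.cast : ℕ → ℤ) (hid.symm.trans hd)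
      exact ⟨(-1) ^ (k + 1) * d + c, by linear_combination ((-1 : ℤ)) ^ (k + 1) * hd' + hc⟩

lemma y_pow_pred (hp : p.Prime) :
    yy p ^ (p - 1) = uu p + (p : AddMonoidAlgebra ℤ (ZMod p)) * vv p := by
  have h1 : p - 1 + 1 = p := Nat.succ_pred_eq_of_pos hp.pos
  rw [yy_pow, h1, uu, vv, Finset.mul_sum, ← Finset.sum_add_distrib]
  refine Finset.sum_congr rfl fun k hk => ?_
  have hcast : ((p : ℕ) : AddMonoidAlgebra ℤ (ZMod p))
      = (((p : ℤ)) : AddMonoidAlgebra ℤ (ZMod p)) := by push_cast; ring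
  rw [hcast, intCast_mul_single, ← AddMonoidAlgebra.single_add]
  congr 1
  have hdvd := choose_pred_dvd p hp k (Finset.mem_range.1 hk)
  have := Int.mul_ediv_cancel' hdvd
  linarith

lemma eps_vv (hp : p.Prime) : eps p (vv p) = -1 := by
  have h0 : eps p (yy p ^ (p - 1)) = 0 := by
    rw [map_pow, eps_yy, zero_pow (Nat.sub_ne_zero_of_lt hp.one_lt)]
  rw [y_pow_pred p hp] at h0
  rw [map_add, map_mul, eps_uu, map_natCast] at h0
  have hp0 : (p : ℤ) ≠ 0 := by exact_mod_cast hp.pos.ne'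
  have : (p : ℤ) * (1 + eps p (vv p)) = 0 := by linarith
  rcases mul_eq_zero.1 this with h | h
  · exact absurd h hp0
  · linarith

lemma main [NeZero p] (hp : p.Prime) (s : ℕ) (hs : 1 ≤ s) :
    ∃ z w : AddMonoidAlgebra ℤ (ZMod p),
      yy p ^ ((p - 1) * s) = (p : AddMonoidAlgebra ℤ (ZMod p)) ^ (s - 1) * z ∧
      z = (-1 : AddMonoidAlgebra ℤ (ZMod p)) ^ (s - 1) * uu p
            + (p : AddMonoidAlgebra ℤ (ZMod p)) * w ∧
      eps p z = 0 := by
  induction s, hs using Nat.le_induction with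
  | base =>
      refine ⟨uu p + (p : AddMonoidAlgebra ℤ (ZMod p)) * vv p, vv p, ?_, by simp, ?_⟩
      · rw [mul_one, ← y_pow_pred p hp]; simp
      · rw [← y_pow_pred p hp, map_pow, eps_yy,
          zero_pow (Nat.sub_ne_zero_of_lt hp.one_lt)]
  | succ s hs ih =>
      obtain ⟨z, w, h1, h2, h3⟩ := ih
      refine ⟨vv p * z, vv p * w, ?_, ?_, ?_⟩
      · have : (p - 1) * (s + 1) = (p - 1) * s + (p - 1) := by ring
        rw [this, pow_add, h1, y_pow_pred p hp]
        have hzu : z * uu p = 0 := by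
          rw [mul_comm, uu_mul p z, h3]
          simp
        have hexp : s + 1 - 1 = (s - 1) + 1 := by omega
        rw [hexp, pow_succ]
        have hr : (p : AddMonoidAlgebra ℤ (ZMod p)) ^ (s-1) * z
              * (uu p + (p : AddMonoidAlgebra ℤ (ZMod p)) * vv p)
            = (p : AddMonoidAlgebra ℤ (ZMod p)) ^ (s-1) * (z * uu p)
              + (p : AddMonoidAlgebra ℤ (ZMod p)) ^ (s-1)
                * (p : AddMonoidAlgebra ℤ (ZMod p)) * (vv p * z) := by ring
        rw [hr, hzu, mul_zero, zero_add]
      · have hvu : vv p * uu p = -uu p := by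
          rw [mul_comm, uu_mul p (vv p), eps_vv p hp]
          push_cast
          ring
        have hexp : s + 1 - 1 = (s - 1) + 1 := by omega
        rw [h2, hexp, pow_succ]
        calc vv p * ((-1 : AddMonoidAlgebra ℤ (ZMod p)) ^ (s - 1) * uu p
                + (p : AddMonoidAlgebra ℤ (ZMod p)) * w)
            = (-1 : AddMonoidAlgebra ℤ (ZMod p)) ^ (s - 1) * (vv p * uu p)
              + (p : AddMonoidAlgebra ℤ (ZMod p)) * (vv p * w) := by ring
          _ = _ := by rw [hvu]; ring
      · rw [map_mul, h3, mul_zero]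

lemma S1sum_eq (n : ℕ) (r : ℤ) : S1sum p n r = (yy p ^ n).coeff (r : ZMod p) := by
  classical
  rw [yy_pow, AddMonoidAlgebra.coeff_sum, Finset.sum_apply', S1sum]
  refine Finset.sum_congr rfl fun k hk => ?_
  rw [AddMonoidAlgebra.coeff_single, Finsupp.single_apply]
  have hcond : ((k : ZMod p) = (r : ZMod p)) ↔ ((k : ℤ) ≡ r [ZMOD p]) := by
    rw [show ((k : ZMod p)) = (((k : ℤ) : ZMod p)) from (Int.cast_natCast k).symm,
      ZMod.intCast_eq_intCast_iff]
  simp [hcond]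

end S1Aux

theorem stmt11 (p s : ℕ) (r : ℤ) (hp : p.Prime) (hodd : Odd p) (hs : 1 ≤ s) :
    (p : ℤ) ^ (((p - 1) * s - 1) / (p - 1)) ∣ S1sum p ((p - 1) * s) r ∧
      S1 p ((p - 1) * s) r ≡ (-1) ^ (s - 1) [ZMOD p] := by
  haveI : NeZero p := ⟨hp.pos.ne'⟩
  have hp3 : 3 ≤ p := by
    have h2 := hp.two_le
    rcases hodd with ⟨m, hm⟩
    omega
  have hexp : ((p - 1) * s - 1) / (p - 1) = s - 1 := by
    obtain ⟨t, rfl⟩ : ∃ t, s = t + 1 := ⟨s - 1, by omega⟩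
    have h1 : (p - 1) * (t + 1) = (p - 1) * t + (p - 1) := by ring
    have h3 : (p - 1) * t = t * (p - 1) := by ring
    have h2 : (p - 1) * (t + 1) - 1 = (p - 2) + t * (p - 1) := by omega
    rw [h2, Nat.add_mul_div_right _ _ (by omega : 0 < p - 1),
      Nat.div_eq_of_lt (by omega)]
    omega
  obtain ⟨z, w, h1, h2, h3⟩ := S1Aux.main p hp s hs
  set x : ZMod p := (r : ZMod p) with hx
  have coef : ∀ (c : ℤ) (f : AddMonoidAlgebra ℤ (ZMod p)),
      ((c : AddMonoidAlgebra ℤ (ZMod p)) * f).coeff x = c * f.coeff x := by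
    intro c f
    rw [AddMonoidAlgebra.intCast_def]
    exact AddMonoidAlgebra.coeff_single_zero_mul f c x
  have hsum : S1sum p ((p - 1) * s) r = (p : ℤ) ^ (s - 1) * z.coeff x := by
    rw [S1Aux.S1sum_eq, h1]
    have hc : ((p : AddMonoidAlgebra ℤ (ZMod p)) ^ (s - 1))
        = (((p : ℤ) ^ (s - 1) : ℤ) : AddMonoidAlgebra ℤ (ZMod p)) := by push_cast; ring
    rw [hc, coef]
  have hz : z.coeff x = (-1 : ℤ) ^ (s - 1) + (p : ℤ) * w.coeff x := by
    have h2' := congrArg (fun f : AddMonoidAlgebra ℤ (ZMod p) => f.coeff x) h2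
    rw [AddMonoidAlgebra.coeff_add, Finsupp.add_apply] at h2'
    have hc1 : ((-1 : AddMonoidAlgebra ℤ (ZMod p)) ^ (s - 1))
        = (((-1 : ℤ) ^ (s - 1) : ℤ) : AddMonoidAlgebra ℤ (ZMod p)) := by push_cast; ring
    have hc2 : ((p : ℕ) : AddMonoidAlgebra ℤ (ZMod p))
        = (((p : ℤ)) : AddMonoidAlgebra ℤ (ZMod p)) := by push_cast; ring
    rw [hc1, hc2, coef, coef, S1Aux.uu_apply, mul_one] at h2'
    exact h2'
  have hp0 : (p : ℤ) ≠ 0 := by exact_mod_cast hp.pos.ne'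
  constructor
  · rw [hexp, hsum]
    exact Dvd.intro _ rfl
  · have hS1 : S1 p ((p - 1) * s) r = z.coeff x := by
      rw [S1, hexp, hsum, Int.mul_ediv_cancel_left _ (pow_ne_zero _ hp0)]
    rw [hS1]
    exact (Int.modEq_iff_dvd.mpr ⟨-(w.coeff x), by rw [hz]; ring⟩)
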